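/- Let A = [a_1,...,a_r] be an admissible twig, let B be a twig that is either empty or admissible, and let m be an integer. Then the list [m] ++ A ++ [1] ++ B contracts to the list [m, 1] (by a sequence of blowdown steps) if and only if B equals the adjoint A* of A with its last entry removed. -/

import Mathlib

open Matrix BigOperators

/-- The intersection-type matrix of a twig `A = [a_1,...,a_r]`: the `r × r` symmetric
tridiagonal matrix with diagonal entries `a_1,...,a_r` and `-1` on the sub/super-diagonals. -/
def twigMatrix (A : List ℤ) : Matrix (Fin A.length) (Fin A.length) ℤ :=
  fun i j =>
    if i = j then A.get i
    else if (i : ℕ) + 1 = (j : ℕ) ∨ (j : ℕ) + 1 = (i : ℕ) then -1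
    else 0

/-- The determinant `d(A)` of a twig; in particular `d([]) = 1`. -/
def twigDet (A : List ℤ) : ℤ := (twigMatrix A).det

/-- A twig is admissible if it is nonempty and all its entries are `≥ 2`. -/
def Admissible (A : List ℤ) : Prop := A ≠ [] ∧ ∀ a ∈ A, 2 ≤ a

/-- A single blowdown step on a finite list of integers:
`[..., x, 1, y, ...]` becomes `[..., x−1, y−1, ...]`; `[1, y, ...]` becomes `[y−1, ...]`;
`[..., x, 1]` becomes `[..., x−1]`. -/
inductive BlowdownStep : List ℤ → List ℤ → Prop
  | mid (L₁ L₂ : List ℤ) (x y : ℤ) :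
      BlowdownStep (L₁ ++ [x, 1, y] ++ L₂) (L₁ ++ [x - 1, y - 1] ++ L₂)
  | left (y : ℤ) (L : List ℤ) :
      BlowdownStep (1 :: y :: L) ((y - 1) :: L)
  | right (L : List ℤ) (x : ℤ) :
      BlowdownStep (L ++ [x, 1]) (L ++ [x - 1])

/-- `L` contracts to `L'` if `L'` is obtained from `L` by finitely many blowdown steps. -/
def Contracts (L L' : List ℤ) : Prop := Relation.ReflTransGen BlowdownStep L L'


def dd4 : List ℤ → ℤ × ℤ × ℤ × ℤ
  | [] => (1, 0, 0, 1)
  | a :: T =>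
    let w := dd4 T
    (a * w.1 - w.2.2.1, a * w.2.1 - w.2.2.2, w.1, w.2.1)

@[simp] lemma dd4_nil : dd4 [] = (1,0,0,1) := rfl
lemma dd4_cons (a : ℤ) (T : List ℤ) :
    dd4 (a :: T) = (a * (dd4 T).1 - (dd4 T).2.2.1, a * (dd4 T).2.1 - (dd4 T).2.2.2,
      (dd4 T).1, (dd4 T).2.1) := rfl

lemma twigMatrix_succ (c : ℤ) (L : List ℤ) :
    (twigMatrix (c::L)).submatrix Fin.succ Fin.succ = twigMatrix L := by
  ext i j
  simp only [twigMatrix, Matrix.submatrix_apply]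
  have h1 : (i.succ = j.succ) ↔ (i = j) := by
    constructor
    · intro h; exact Fin.succ_injective _ h
    · intro h; rw [h]
  rw [if_congr h1 rfl rfl]
  by_cases hij : i = j
  · subst hij; simp
  · rw [if_neg hij, if_neg hij]
    have h2 : ((i.succ : ℕ) + 1 = (j.succ : ℕ) ∨ (j.succ : ℕ) + 1 = (i.succ : ℕ)) ↔
        ((i : ℕ) + 1 = (j : ℕ) ∨ (j : ℕ) + 1 = (i : ℕ)) := by
      simp [Fin.val_succ]
    rw [if_congr h2 rfl rfl]

lemma twigDet_nil : twigDet [] = 1 := by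
  simp [twigDet, Matrix.det_isEmpty]

lemma twigDet_singleton (a : ℤ) : twigDet [a] = a := by
  have : twigDet [a] = twigMatrix [a] ⟨0, by simp⟩ ⟨0, by simp⟩ := Matrix.det_fin_one _
  rw [this]; simp [twigMatrix]

lemma twigDet_cons_cons (a b : ℤ) (T : List ℤ) :
    twigDet (a::b::T) = a * twigDet (b::T) - twigDet T := by
  classical
  set n := T.length with hn
  set M : Matrix (Fin (n+1+1)) (Fin (n+1+1)) ℤ := twigMatrix (a::b::T) with hM
  have hdet : twigDet (a::b::T) =
      ∑ j : Fin (n+1+1), (-1)^(j:ℕ) * M 0 j * (M.submatrix Fin.succ j.succAbove).det :=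
    Matrix.det_succ_row_zero M
  -- entries of the first row
  have hM00 : M 0 0 = a := by simp [hM, twigMatrix]
  have hM01 : M 0 1 = -1 := by
    have h0 : ((0 : Fin (n+1+1)) : ℕ) = 0 := rfl
    have h1 : ((1 : Fin (n+1+1)) : ℕ) = 1 := rfl
    have hne : (0 : Fin (n+1+1)) ≠ 1 := by
      intro h; rw [Fin.ext_iff, h0, h1] at h; omega
    simp [hM, twigMatrix, hne, h0, h1]
  have hM0succsucc : ∀ j : Fin n, M 0 j.succ.succ = 0 := by
    intro j
    have hv : ((j.succ.succ : Fin (n+1+1)) : ℕ) = (j : ℕ) + 2 := by simp [Fin.val_succ]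
    have hne : (0 : Fin (n+1+1)) ≠ j.succ.succ := by
      intro h; rw [Fin.ext_iff] at h; simp [hv] at h
    have hadj : ¬ (((0 : Fin (n+1+1)) : ℕ) + 1 = ((j.succ.succ : Fin (n+1+1)) : ℕ) ∨
        ((j.succ.succ : Fin (n+1+1)) : ℕ) + 1 = ((0 : Fin (n+1+1)) : ℕ)) := by
      rw [hv]; simp
    simp only [hM, twigMatrix]
    rw [if_neg hne, if_neg hadj]
  rw [hdet, Fin.sum_univ_succ, Fin.sum_univ_succ]
  have hzero : ∑ j : Fin n, (-1)^((j.succ.succ : Fin (n+1+1)) : ℕ) * M 0 j.succ.succ *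
      (M.submatrix Fin.succ j.succ.succ.succAbove).det = 0 := by
    apply Finset.sum_eq_zero; intro j _
    rw [hM0succsucc j]; ring
  have hminor0 : (M.submatrix Fin.succ ((0 : Fin (n+1+1)).succAbove)).det = twigDet (b::T) := by
    rw [Fin.succAbove_zero]
    show ((twigMatrix (a::b::T)).submatrix Fin.succ Fin.succ).det = _
    rw [twigMatrix_succ]; rfl
  -- the (0,1) minor
  have hminor1 : (M.submatrix Fin.succ ((1 : Fin (n+1+1)).succAbove)).det = - twigDet T := by
    set N : Matrix (Fin (n+1)) (Fin (n+1)) ℤ := M.submatrix Fin.succ ((1 : Fin (n+1+1)).succAbove) with hN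
    have hdetN : N.det = ∑ i : Fin (n+1), (-1)^(i:ℕ) * N i 0 * (N.submatrix i.succAbove Fin.succ).det :=
      Matrix.det_succ_column_zero N
    have hN00 : N 0 0 = -1 := by
      have hsa : (1 : Fin (n+1+1)).succAbove 0 = 0 := by
        rw [Fin.succAbove_of_castSucc_lt]
        · rfl
        · rw [Fin.lt_iff_val_lt_val]; simp
      show M (Fin.succ 0) ((1 : Fin (n+1+1)).succAbove 0) = -1
      rw [hsa]
      have hne : (Fin.succ 0 : Fin (n+1+1)) ≠ 0 := Fin.succ_ne_zero _
      have hadj : ((Fin.succ 0 : Fin (n+1+1)) : ℕ) + 1 = ((0 : Fin (n+1+1)) : ℕ) ∨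
          ((0 : Fin (n+1+1)) : ℕ) + 1 = ((Fin.succ 0 : Fin (n+1+1)) : ℕ) := by
        right; simp
      simp only [hM, twigMatrix]
      rw [if_neg hne, if_pos hadj]
    have hNi0 : ∀ i : Fin n, N i.succ 0 = 0 := by
      intro i
      have hsa : (1 : Fin (n+1+1)).succAbove 0 = 0 := by
        rw [Fin.succAbove_of_castSucc_lt]
        · rfl
        · rw [Fin.lt_iff_val_lt_val]; simp
      show M (Fin.succ i.succ) ((1 : Fin (n+1+1)).succAbove 0) = 0
      rw [hsa]
      have hv : ((Fin.succ i.succ : Fin (n+1+1)) : ℕ) = (i : ℕ) + 2 := by simp [Fin.val_succ]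
      have hne : (Fin.succ i.succ : Fin (n+1+1)) ≠ 0 := Fin.succ_ne_zero _
      have hadj : ¬ (((Fin.succ i.succ : Fin (n+1+1)) : ℕ) + 1 = ((0 : Fin (n+1+1)) : ℕ) ∨
          ((0 : Fin (n+1+1)) : ℕ) + 1 = ((Fin.succ i.succ : Fin (n+1+1)) : ℕ)) := by
        rw [hv]; simp
      simp only [hM, twigMatrix]
      rw [if_neg hne, if_neg hadj]
    have hminor : (N.submatrix ((0 : Fin (n+1)).succAbove) Fin.succ).det = twigDet T := by
      rw [Fin.succAbove_zero]
      have hcols : (1 : Fin (n+1+1)).succAbove ∘ (Fin.succ : Fin n → Fin (n+1)) =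
          (Fin.succ : Fin (n+1) → Fin (n+1+1)) ∘ Fin.succ := by
        funext j
        simp only [Function.comp_apply]
        rw [Fin.succAbove_of_le_castSucc]
        rw [Fin.le_iff_val_le_val]
        simp [Fin.val_succ]
      have : N.submatrix (Fin.succ : Fin n → Fin (n+1)) (Fin.succ : Fin n → Fin (n+1)) =
          twigMatrix T := by
        rw [hN, Matrix.submatrix_submatrix, hcols]
        have : M.submatrix ((Fin.succ : Fin (n+1) → Fin (n+1+1)) ∘ Fin.succ)
            ((Fin.succ : Fin (n+1) → Fin (n+1+1)) ∘ Fin.succ) =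
            ((twigMatrix (a::b::T)).submatrix Fin.succ Fin.succ).submatrix Fin.succ Fin.succ := by
          rw [Matrix.submatrix_submatrix]
        rw [this, twigMatrix_succ, twigMatrix_succ]
      rw [this]; rfl
    have hzeroN : ∑ i : Fin n, (-1)^((i.succ : Fin (n+1)) : ℕ) * N i.succ 0 *
        (N.submatrix i.succ.succAbove Fin.succ).det = 0 := by
      apply Finset.sum_eq_zero; intro i _
      rw [hNi0 i]; ring
    rw [hdetN, Fin.sum_univ_succ, hzeroN, hN00, hminor]
    simp
  rw [hzero, hminor0]
  rw [show (Fin.succ (0 : Fin (n+1))) = (1 : Fin (n+1+1)) from rfl]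
  rw [hminor1, hM00, hM01]
  simp
  ring

/-! ### The four continued-fraction invariants -/

def dP (L : List ℤ) : ℤ := (dd4 L).1
def dQ (L : List ℤ) : ℤ := (dd4 L).2.1
def dU (L : List ℤ) : ℤ := (dd4 L).2.2.1
def dV (L : List ℤ) : ℤ := (dd4 L).2.2.2

@[simp] lemma dP_nil : dP [] = 1 := rfl
@[simp] lemma dQ_nil : dQ [] = 0 := rfl
@[simp] lemma dU_nil : dU [] = 0 := rfl
@[simp] lemma dV_nil : dV [] = 1 := rfl
@[simp] lemma dP_cons (a : ℤ) (T : List ℤ) : dP (a::T) = a * dP T - dU T := rfl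
@[simp] lemma dQ_cons (a : ℤ) (T : List ℤ) : dQ (a::T) = a * dQ T - dV T := rfl
@[simp] lemma dU_cons (a : ℤ) (T : List ℤ) : dU (a::T) = dP T := rfl
@[simp] lemma dV_cons (a : ℤ) (T : List ℤ) : dV (a::T) = dQ T := rfl

lemma dd4_eq (L : List ℤ) : dd4 L = (dP L, dQ L, dU L, dV L) := rfl

lemma twigDet_eq : ∀ L : List ℤ, twigDet L = dP L
  | [] => by simp [twigDet_nil]
  | [a] => by simp [twigDet_singleton]
  | a::b::T => by
    rw [twigDet_cons_cons, twigDet_eq (b::T), twigDet_eq T]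
    simp

lemma dd4_append (X Y : List ℤ) : dd4 (X ++ Y) =
    (dP X * dP Y + dQ X * dU Y, dP X * dQ Y + dQ X * dV Y,
     dU X * dP Y + dV X * dU Y, dU X * dQ Y + dV X * dV Y) := by
  induction X with
  | nil => simp [dd4_eq]
  | cons a X ih =>
    have h1 : dP (a :: X ++ Y) = a * dP (X ++ Y) - dU (X ++ Y) := rfl
    simp only [List.cons_append, dd4_eq, dP_cons, dQ_cons, dU_cons, dV_cons]
    have hp : dP (X ++ Y) = dP X * dP Y + dQ X * dU Y := by rw [dP, ih]
    have hq : dQ (X ++ Y) = dP X * dQ Y + dQ X * dV Y := by rw [dQ, ih]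
    have hu : dU (X ++ Y) = dU X * dP Y + dV X * dU Y := by rw [dU, ih]
    have hv : dV (X ++ Y) = dU X * dQ Y + dV X * dV Y := by rw [dV, ih]
    rw [hp, hq, hu, hv]
    refine Prod.ext ?_ (Prod.ext ?_ (Prod.ext ?_ ?_)) <;> simp <;> ring

lemma dP_append (X Y : List ℤ) : dP (X ++ Y) = dP X * dP Y + dQ X * dU Y := by
  rw [dP, dd4_append]
lemma dQ_append (X Y : List ℤ) : dQ (X ++ Y) = dP X * dQ Y + dQ X * dV Y := by
  rw [dQ, dd4_append]
lemma dU_append (X Y : List ℤ) : dU (X ++ Y) = dU X * dP Y + dV X * dU Y := by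
  rw [dU, dd4_append]
lemma dV_append (X Y : List ℤ) : dV (X ++ Y) = dU X * dQ Y + dV X * dV Y := by
  rw [dV, dd4_append]

lemma dd4_reverse (L : List ℤ) : dd4 L.reverse = (dP L, -(dU L), -(dQ L), dV L) := by
  induction L with
  | nil => simp [dd4_eq]
  | cons a T ih =>
    have hrev : (a :: T).reverse = T.reverse ++ [a] := by simp
    have hp : dP T.reverse = dP T := by rw [dP, ih]
    have hq : dQ T.reverse = -(dU T) := by rw [dQ, ih]
    have hu : dU T.reverse = -(dQ T) := by rw [dU, ih]
    have hv : dV T.reverse = dV T := by rw [dV, ih]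
    rw [hrev, dd4_append, hp, hq, hu, hv]
    have ha : dd4 [a] = (a, -1, 1, 0) := by simp [dd4_eq]
    have hap : dP [a] = a := by simp
    have haq : dQ [a] = -1 := by simp
    have hau : dU [a] = 1 := by simp
    have hav : dV [a] = 0 := by simp
    rw [hap, haq, hau, hav]
    refine Prod.ext ?_ (Prod.ext ?_ (Prod.ext ?_ ?_)) <;> simp <;> ring

lemma dd4_dropLast : ∀ L : List ℤ, L ≠ [] → dP L.dropLast = -(dQ L) ∧ dU L.dropLast = -(dV L)
  | [], h => absurd rfl h
  | [a], _ => by simp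
  | a::b::T, _ => by
    have ih := dd4_dropLast (b::T) (by simp)
    have hdl : (a::b::T).dropLast = a :: (b::T).dropLast := rfl
    rw [hdl]
    constructor
    · simp only [dP_cons, ih.1, ih.2, dQ_cons, dV_cons]; ring
    · rw [dU_cons, ih.1, dV_cons]

lemma dd4_det (L : List ℤ) : dP L * dV L - dQ L * dU L = 1 := by
  induction L with
  | nil => simp
  | cons a T ih => simp only [dP_cons, dQ_cons, dU_cons, dV_cons]; linear_combination ih

lemma admissible_tail {a : ℤ} {T : List ℤ} (h : Admissible (a::T)) :
    T = [] ∨ Admissible T := by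
  rcases T with _ | ⟨b, T'⟩
  · exact Or.inl rfl
  · exact Or.inr ⟨by simp, fun x hx => h.2 x (by simp [hx])⟩

/-! ### Positivity bounds -/

lemma dd4_bounds : ∀ X : List ℤ, (X = [] ∨ Admissible X) →
    1 ≤ dP X ∧ 0 ≤ dU X ∧ dU X < dP X := by
  intro X hX
  induction X with
  | nil => simp
  | cons a T ih =>
    rcases hX with h | h
    · exact absurd h (by simp)
    · have ha : 2 ≤ a := h.2 a (by simp)
      have ihT := ih (admissible_tail h)
      obtain ⟨h1, h2, h3⟩ := ihT
      simp only [dP_cons, dU_cons]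
      refine ⟨by nlinarith, by linarith, by nlinarith⟩

lemma admissible_reverse {X : List ℤ} (h : Admissible X) : Admissible X.reverse :=
  ⟨by simp [h.1], fun x hx => h.2 x (by simpa using hx)⟩

lemma dd4_bounds_q (X : List ℤ) (hX : X = [] ∨ Admissible X) :
    0 ≤ -(dQ X) ∧ -(dQ X) < dP X := by
  have hrev : X.reverse = [] ∨ Admissible X.reverse := by
    rcases hX with h | h
    · left; simp [h]
    · right; exact admissible_reverse h
  have hb := dd4_bounds X.reverse hrev
  have hu : dU X.reverse = -(dQ X) := by rw [dU, dd4_reverse]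
  have hp : dP X.reverse = dP X := by rw [dP, dd4_reverse]
  rw [hu, hp] at hb
  exact ⟨hb.2.1, hb.2.2⟩

/-! ### Uniqueness of admissible twigs with given (dP, dU) -/

lemma dd4_inj : ∀ X Y : List ℤ, (X = [] ∨ Admissible X) → (Y = [] ∨ Admissible Y) →
    dP X = dP Y → dU X = dU Y → X = Y := by
  intro X
  induction X with
  | nil =>
    intro Y _ hY hp hu
    rcases Y with _ | ⟨b, S⟩
    · rfl
    · exfalso
      have hS : S = [] ∨ Admissible S := admissible_tail (hY.resolve_left (by simp))
      have := (dd4_bounds S hS).1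
      simp only [dU_nil, dU_cons] at hu
      omega
  | cons a T ih =>
    intro Y hX hY hp hu
    rcases Y with _ | ⟨b, S⟩
    · exfalso
      have hT : T = [] ∨ Admissible T := admissible_tail (hX.resolve_left (by simp))
      have := (dd4_bounds T hT).1
      simp only [dU_nil, dU_cons] at hu
      omega
    · have hT : T = [] ∨ Admissible T := admissible_tail (hX.resolve_left (by simp))
      have hS : S = [] ∨ Admissible S := admissible_tail (hY.resolve_left (by simp))
      simp only [dU_cons] at hu
      simp only [dP_cons] at hp
      obtain ⟨hT1, hT2, hT3⟩ := dd4_bounds T hT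
      obtain ⟨hS1, hS2, hS3⟩ := dd4_bounds S hS
      rw [← hu] at hp; rw [← hu] at hS3
      have key : (a - b) * dP T = dU T - dU S := by linarith
      have hab : a = b := by
        rcases lt_trichotomy a b with h | h | h
        · exfalso; nlinarith
        · exact h
        · exfalso; nlinarith
      have huTS : dU T = dU S := by
        rw [hab] at key; nlinarith
      rw [hab, ih S hT hS hu huTS]

/-! ### The adjoint twig -/

def headInc : List ℤ → List ℤ
  | [] => [2]
  | h :: t => (h+1) :: t

def adjR : List ℤ → List ℤ
  | [] => []
  | a :: T =>
    if a ≤ 2 then (if T = [] then [2] else headInc (adjR T))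
    else 2 :: adjR ((a-1) :: T)
termination_by L => (L.map Int.toNat).sum + L.length
decreasing_by
  all_goals simp only [List.map_cons, List.sum_cons, List.length_cons]
  all_goals omega

lemma adjR_admissible : ∀ R : List ℤ, R ≠ [] → (∀ x ∈ R, 2 ≤ x) → Admissible (adjR R) := by
  intro R
  induction R using adjR.induct with
  | case1 => intro h; exact absurd rfl h
  | case2 a ha =>
    intro _ _
    rw [adjR, if_pos ha, if_pos rfl]
    exact ⟨by simp, by intro x hx; simp at hx; omega⟩
  | case3 a T ha hT ih =>
    intro _ h2
    rw [adjR, if_pos ha, if_neg hT]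
    have hadm := ih hT (fun x hx => h2 x (by simp [hx]))
    rcases hh : adjR T with _ | ⟨h, t⟩
    · exact absurd hh hadm.1
    · rw [headInc]
      constructor
      · simp
      · intro x hx
        have hh2 := hadm.2
        rw [hh] at hh2
        rcases List.mem_cons.mp hx with h' | h'
        · have := hh2 h (by simp); omega
        · exact hh2 x (by simp [h'])
  | case4 a T ha ih =>
    intro _ h2
    rw [adjR, if_neg ha]
    have hadm := ih (by simp) (by
      intro x hx
      rcases List.mem_cons.mp hx with h' | h'
      · have := h2 a (by simp); omega
      · exact h2 x (by simp [h']))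
    exact ⟨by simp, by
      intro x hx
      rcases List.mem_cons.mp hx with h' | h'
      · omega
      · exact hadm.2 x h'⟩

lemma adjR_spec : ∀ R : List ℤ, R ≠ [] → (∀ x ∈ R, 2 ≤ x) →
    dP (adjR R) = dP R ∧ dQ (adjR R) = -(dP R + dQ R) ∧
    dU (adjR R) = dP R - dU R ∧ dV (adjR R) = dU R - dQ R + dV R - dP R := by
  intro R
  induction R using adjR.induct with
  | case1 => intro h; exact absurd rfl h
  | case2 a ha =>
    intro _ h2
    have ha2 : a = 2 := le_antisymm ha (h2 a (by simp))
    rw [adjR, if_pos ha, if_pos rfl, ha2]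
    norm_num
  | case3 a T ha hT ih =>
    intro _ h2
    have ha2 : a = 2 := le_antisymm ha (h2 a (by simp))
    have h2T : ∀ x ∈ T, 2 ≤ x := fun x hx => h2 x (by simp [hx])
    obtain ⟨ih1, ih2, ih3, ih4⟩ := ih hT h2T
    have hadm := adjR_admissible T hT h2T
    rw [adjR, if_pos ha, if_neg hT, ha2]
    rcases hh : adjR T with _ | ⟨h, t⟩
    · exact absurd hh hadm.1
    · rw [hh] at ih1 ih2 ih3 ih4
      rw [headInc]
      simp only [dP_cons, dQ_cons, dU_cons, dV_cons] at *
      refine ⟨by linarith, by linarith, by linarith, by linarith⟩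
  | case4 a T ha ih =>
    intro _ h2
    have h2T : ∀ x ∈ (a-1)::T, 2 ≤ x := by
      intro x hx
      rcases List.mem_cons.mp hx with h' | h'
      · have := h2 a (by simp); omega
      · exact h2 x (by simp [h'])
    obtain ⟨ih1, ih2, ih3, ih4⟩ := ih (by simp) h2T
    rw [adjR, if_neg ha]
    simp only [dP_cons, dQ_cons, dU_cons, dV_cons] at *
    refine ⟨by linarith, by linarith, by linarith, by linarith⟩

/-! ### Construction of the contraction -/

lemma contracts_aux : ∀ R : List ℤ, R ≠ [] → (∀ x ∈ R, 2 ≤ x) → ∀ Z : List ℤ,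
    Contracts (Z ++ R.reverse ++ [1] ++ (adjR R).dropLast) (Z ++ [1]) := by
  intro R
  induction R using adjR.induct with
  | case1 => intro h; exact absurd rfl h
  | case2 a ha =>
    intro _ h2 Z
    have ha2 : a = 2 := le_antisymm ha (h2 a (by simp))
    rw [adjR, if_pos ha, if_pos rfl, ha2]
    have hstep : BlowdownStep (Z ++ [2, 1]) (Z ++ [2 - 1]) := BlowdownStep.right Z 2
    have heq1 : Z ++ [(2:ℤ)].reverse ++ [1] ++ ([2]:List ℤ).dropLast = Z ++ [2, 1] := by simp
    have heq2 : Z ++ [(2:ℤ) - 1] = Z ++ [1] := by norm_num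
    rw [heq1]
    exact Relation.ReflTransGen.single (heq2 ▸ hstep)
  | case3 a T ha hT ih =>
    intro _ h2 Z
    have ha2 : a = 2 := le_antisymm ha (h2 a (by simp))
    have h2T : ∀ x ∈ T, 2 ≤ x := fun x hx => h2 x (by simp [hx])
    have hadm := adjR_admissible T hT h2T
    have ihZ := ih hT h2T Z
    rw [adjR, if_pos ha, if_neg hT, ha2]
    rcases hh : adjR T with _ | ⟨h, t⟩
    · exact absurd hh hadm.1
    · rw [hh] at ihZ
      rcases t with _ | ⟨c, t'⟩
      · -- adjR T = [h], B = []
        have hstep : BlowdownStep (Z ++ T.reverse ++ [2, 1]) (Z ++ T.reverse ++ [2 - 1]) :=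
          BlowdownStep.right (Z ++ T.reverse) 2
        have heq1 : Z ++ ((2:ℤ) :: T).reverse ++ [1] ++ (headInc [h]).dropLast
            = Z ++ T.reverse ++ [2, 1] := by simp [headInc]
        have heq2 : Z ++ T.reverse ++ [(2:ℤ) - 1] = Z ++ T.reverse ++ [1] ++ ([h]:List ℤ).dropLast := by
          norm_num
        rw [heq1]
        refine Relation.ReflTransGen.head (heq2 ▸ hstep) ?_
        simpa [List.append_assoc, Contracts] using ihZ
      · -- adjR T = h :: c :: t'
        have hstep : BlowdownStep
            ((Z ++ T.reverse) ++ [2, 1, h+1] ++ (c :: t').dropLast)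
            ((Z ++ T.reverse) ++ [2 - 1, (h+1) - 1] ++ (c :: t').dropLast) :=
          BlowdownStep.mid (Z ++ T.reverse) ((c :: t').dropLast) 2 (h+1)
        have heq1 : Z ++ ((2:ℤ) :: T).reverse ++ [1] ++ (headInc (h :: c :: t')).dropLast
            = (Z ++ T.reverse) ++ [2, 1, h+1] ++ (c :: t').dropLast := by
          simp [headInc, List.append_assoc]
        have heq2 : (Z ++ T.reverse) ++ [(2:ℤ) - 1, (h+1) - 1] ++ (c :: t').dropLast
            = Z ++ T.reverse ++ [1] ++ (h :: c :: t').dropLast := by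
          have : ((h:ℤ)+1) - 1 = h := by ring
          rw [this]
          have hdl : ((h:ℤ) :: c :: t').dropLast = h :: (c :: t').dropLast := rfl
          rw [hdl]
          norm_num [List.append_assoc]
        rw [heq1]
        refine Relation.ReflTransGen.head (heq2 ▸ hstep) ?_
        exact ihZ
  | case4 a T ha ih =>
    intro _ h2 Z
    have h2T : ∀ x ∈ (a-1)::T, 2 ≤ x := by
      intro x hx
      rcases List.mem_cons.mp hx with h' | h'
      · have := h2 a (by simp); omega
      · exact h2 x (by simp [h'])
    have hadm := adjR_admissible ((a-1)::T) (by simp) h2T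
    have ihZ := ih (by simp) h2T Z
    rw [adjR, if_neg ha]
    rcases hh : adjR ((a-1)::T) with _ | ⟨h, t⟩
    · exact absurd hh hadm.1
    · rw [hh] at ihZ
      have hstep : BlowdownStep
          ((Z ++ T.reverse) ++ [a, 1, 2] ++ (h :: t).dropLast)
          ((Z ++ T.reverse) ++ [a - 1, 2 - 1] ++ (h :: t).dropLast) :=
        BlowdownStep.mid (Z ++ T.reverse) ((h :: t).dropLast) a 2
      have heq1 : Z ++ (a :: T).reverse ++ [1] ++ ((2:ℤ) :: h :: t).dropLast
          = (Z ++ T.reverse) ++ [a, 1, 2] ++ (h :: t).dropLast := by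
        have hdl : ((2:ℤ) :: h :: t).dropLast = 2 :: (h :: t).dropLast := rfl
        rw [hdl]
        simp [List.append_assoc]
      have heq2 : (Z ++ T.reverse) ++ [a - 1, (2:ℤ) - 1] ++ (h :: t).dropLast
          = Z ++ ((a-1) :: T).reverse ++ [1] ++ (h :: t).dropLast := by
        norm_num [List.append_assoc]
      rw [heq1]
      refine Relation.ReflTransGen.head (heq2 ▸ hstep) ?_
      exact ihZ

/-! ### Effect of blowdown steps on the invariants -/

lemma dd4_mid (L₁ L₂ : List ℤ) (x y : ℤ) :
    dd4 (L₁ ++ [x - 1, y - 1] ++ L₂) = dd4 (L₁ ++ [x, 1, y] ++ L₂) := by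
  have e : ∀ f : ℤ × ℤ × ℤ × ℤ → ℤ, (∀ X Y : List ℤ, True) → True := fun _ _ => trivial
  have h3 : dd4 ([x - 1, y - 1] ++ L₂) = dd4 ([x, 1, y] ++ L₂) := by
    rw [dd4_append, dd4_append]
    have e1 : dP [x, 1, y] = dP [x-1, y-1] := by
      simp only [dP_cons, dQ_cons, dU_cons, dV_cons, dP_nil, dQ_nil, dU_nil, dV_nil]; ring
    have e2 : dQ [x, 1, y] = dQ [x-1, y-1] := by
      simp only [dP_cons, dQ_cons, dU_cons, dV_cons, dP_nil, dQ_nil, dU_nil, dV_nil]; ring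
    have e3 : dU [x, 1, y] = dU [x-1, y-1] := by
      simp only [dP_cons, dQ_cons, dU_cons, dV_cons, dP_nil, dQ_nil, dU_nil, dV_nil]; ring
    have e4 : dV [x, 1, y] = dV [x-1, y-1] := by
      simp only [dP_cons, dQ_cons, dU_cons, dV_cons, dP_nil, dQ_nil, dU_nil, dV_nil]; ring
    rw [e1, e2, e3, e4]
  have hp : dP ([x - 1, y - 1] ++ L₂) = dP ([x, 1, y] ++ L₂) := by rw [dP, dP, h3]
  have hq : dQ ([x - 1, y - 1] ++ L₂) = dQ ([x, 1, y] ++ L₂) := by rw [dQ, dQ, h3]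
  have hu : dU ([x - 1, y - 1] ++ L₂) = dU ([x, 1, y] ++ L₂) := by rw [dU, dU, h3]
  have hv : dV ([x - 1, y - 1] ++ L₂) = dV ([x, 1, y] ++ L₂) := by rw [dV, dV, h3]
  rw [List.append_assoc, List.append_assoc, dd4_append, dd4_append, hp, hq, hu, hv]

lemma step_dd4 {L L' : List ℤ} (h : BlowdownStep L L') : ∃ k l : ℤ, 0 ≤ k ∧ 0 ≤ l ∧
    dP L' = dP L ∧ dU L' = dU L - k * dP L ∧ dQ L' = dQ L + l * dP L ∧
    dV L' = dV L + l * dU L - k * dQ L - k * l * dP L := by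
  cases h with
  | mid L₁ L₂ x y =>
    have h := dd4_mid L₁ L₂ x y
    refine ⟨0, 0, le_refl _, le_refl _, ?_, ?_, ?_, ?_⟩
    · rw [dP, dP, h]
    · rw [dU, dU, h]; ring
    · rw [dQ, dQ, h]; ring
    · rw [dV, dV, h]
      rw [show dU (L₁ ++ [x, 1, y] ++ L₂) = (dd4 (L₁ ++ [x, 1, y] ++ L₂)).2.2.1 from rfl,
        show dQ (L₁ ++ [x, 1, y] ++ L₂) = (dd4 (L₁ ++ [x, 1, y] ++ L₂)).2.1 from rfl,
        show dP (L₁ ++ [x, 1, y] ++ L₂) = (dd4 (L₁ ++ [x, 1, y] ++ L₂)).1 from rfl]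
      ring
  | left y L =>
    refine ⟨1, 0, by norm_num, le_refl _, ?_, ?_, ?_, ?_⟩ <;>
      simp only [dP_cons, dQ_cons, dU_cons, dV_cons] <;> ring
  | right L x =>
    refine ⟨0, 1, le_refl _, by norm_num, ?_, ?_, ?_, ?_⟩ <;>
      simp only [dP_append, dQ_append, dU_append, dV_append, dP_cons, dQ_cons, dU_cons,
        dV_cons, dP_nil, dQ_nil, dU_nil, dV_nil] <;> ring

lemma contracts_dd4 {L Z : List ℤ} (h : Contracts L Z) : ∃ k l : ℤ, 0 ≤ k ∧ 0 ≤ l ∧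
    dP Z = dP L ∧ dU Z = dU L - k * dP L ∧ dQ Z = dQ L + l * dP L ∧
    dV Z = dV L + l * dU L - k * dQ L - k * l * dP L := by
  induction h with
  | refl => exact ⟨0, 0, le_refl _, le_refl _, by ring, by ring, by ring, by ring⟩
  | @tail M Z2 hpre hstep ih =>
    obtain ⟨k, l, hk, hl, e1, e2, e3, e4⟩ := ih
    obtain ⟨k', l', hk', hl', f1, f2, f3, f4⟩ := step_dd4 hstep
    refine ⟨k + k', l + l', by linarith, by linarith, ?_, ?_, ?_, ?_⟩
    · rw [f1, e1]
    · rw [f2, e2, e1]; ring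
    · rw [f3, e3, e1]; ring
    · rw [f4, e4, e2, e3, e1]; ring

/-! ### Contractions starting with a nonpositive head never use left steps -/

lemma contracts_nonpos {Z : List ℤ} :
    ∀ {L : List ℤ}, Contracts L Z → ∀ h0 W, L = h0 :: W → h0 ≤ 0 →
    dP Z = dP L ∧ dU Z = dU L := by
  intro L h
  induction h using Relation.ReflTransGen.head_induction_on with
  | refl => intro h0 W hL hh; exact ⟨rfl, rfl⟩
  | head hstep hrest ih =>
    intro h0 W hL hh
    cases hstep with
    | mid L₁ L₂ x y =>
      have hmid := dd4_mid L₁ L₂ x y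
      have hPU : dP (L₁ ++ [x - 1, y - 1] ++ L₂) = dP (L₁ ++ [x, 1, y] ++ L₂) ∧
          dU (L₁ ++ [x - 1, y - 1] ++ L₂) = dU (L₁ ++ [x, 1, y] ++ L₂) := by
        constructor
        · rw [dP, dP, hmid]
        · rw [dU, dU, hmid]
      rcases L₁ with _ | ⟨c, L₁'⟩
      · -- head is x, becomes x-1
        have hx : x = h0 := by simpa using congrArg (fun t => t.headI) hL
        have ih' := ih (x - 1) ((y-1) :: L₂) (by simp) (by omega)
        exact ⟨ih'.1.trans hPU.1, ih'.2.trans hPU.2⟩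
      · have ih' := ih c (L₁' ++ [x-1, y-1] ++ L₂) (by simp) (by
          have : c = h0 := by simpa using congrArg (fun t => t.headI) hL
          omega)
        exact ⟨ih'.1.trans hPU.1, ih'.2.trans hPU.2⟩
    | left y L' =>
      exfalso
      have : (1:ℤ) = h0 := by simpa using congrArg (fun t => t.headI) hL
      omega
    | right L' x =>
      have hPU : dP (L' ++ [x - 1]) = dP (L' ++ [x, 1]) ∧
          dU (L' ++ [x - 1]) = dU (L' ++ [x, 1]) := by
        constructor <;>
          simp only [dP_append, dU_append, dP_cons, dQ_cons, dU_cons, dV_cons,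
            dP_nil, dQ_nil, dU_nil, dV_nil] <;> ring
      rcases L' with _ | ⟨c, L₁'⟩
      · have hx : x = h0 := by simpa using congrArg (fun t => t.headI) hL
        have ih' := ih (x - 1) [] (by simp) (by omega)
        exact ⟨ih'.1.trans hPU.1, ih'.2.trans hPU.2⟩
      · have ih' := ih c (L₁' ++ [x-1]) (by simp) (by
          have : c = h0 := by simpa using congrArg (fun t => t.headI) hL
          omega)
        exact ⟨ih'.1.trans hPU.1, ih'.2.trans hPU.2⟩

lemma dropLast_admissible {X : List ℤ} (h : Admissible X) :
    X.dropLast = [] ∨ Admissible X.dropLast := by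
  rcases eq_or_ne X.dropLast [] with h' | h'
  · exact Or.inl h'
  · exact Or.inr ⟨h', fun x hx => h.2 x ((List.dropLast_prefix X).subset hx)⟩

theorem stmt5_aux (A B Astar : List ℤ) (hA : Admissible A)
    (hB : B = [] ∨ Admissible B) (m : ℤ)
    (hAstar : Admissible Astar) (hd : twigDet Astar = twigDet A)
    (hdbar : twigDet Astar.tail = twigDet A - twigDet A.dropLast) :
    Contracts ([m] ++ A ++ [1] ++ B) [m, 1] ↔ B = Astar.dropLast := by
  have hAne : A ≠ [] := hA.1
  have hRne : A.reverse ≠ [] := by simp [hAne]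
  have hR2 : ∀ x ∈ A.reverse, 2 ≤ x := fun x hx => hA.2 x (by simpa using hx)
  have hadjAdm : Admissible (adjR A.reverse) := adjR_admissible A.reverse hRne hR2
  obtain ⟨s1, s2, s3, s4⟩ := adjR_spec A.reverse hRne hR2
  have hrevP : dP A.reverse = dP A := by rw [dP, dd4_reverse]
  have hrevQ : dQ A.reverse = -(dU A) := by rw [dQ, dd4_reverse]
  have hrevU : dU A.reverse = -(dQ A) := by rw [dU, dd4_reverse]
  have hrevV : dV A.reverse = dV A := by rw [dV, dd4_reverse]
  simp only [hrevP, hrevQ, hrevU, hrevV] at s1 s2 s3 s4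
  -- identify Astar with adjR A.reverse
  have hdropA := dd4_dropLast A hAne
  have hstarP : dP Astar = dP A := by rw [← twigDet_eq, ← twigDet_eq]; exact hd
  have hstarU : dU Astar = dP A + dQ A := by
    rcases hAst : Astar with _ | ⟨s, St⟩
    · exact absurd hAst hAstar.1
    · have h1 : dU (s :: St) = dP St := rfl
      have h2 : dP St = twigDet St := (twigDet_eq St).symm
      have h3 : twigDet (Astar.tail) = twigDet St := by rw [hAst]; rfl
      rw [h1, h2, ← h3, hdbar, twigDet_eq, twigDet_eq, hdropA.1]
      ring
  have hAstarEq : Astar = adjR A.reverse := by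
    apply dd4_inj Astar (adjR A.reverse) (Or.inr hAstar) (Or.inr hadjAdm)
    · rw [hstarP, s1]
    · rw [hstarU, s3]; ring
  have hdropAdj := dd4_dropLast (adjR A.reverse) hadjAdm.1
  -- the two ends of the equivalence
  constructor
  · -- hard direction
    intro hC
    have hLeq : [m] ++ A ++ [1] ++ B = m :: (A ++ 1 :: B) := by simp
    rw [hLeq] at hC
    -- component formulas for C₀ = A ++ 1 :: B
    have hCp : dP (A ++ 1 :: B) = dP A * (1 * dP B - dU B) + dQ A * dP B := by
      rw [dP_append]; simp only [dP_cons, dU_cons]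
    have hCu : dU (A ++ 1 :: B) = dU A * (1 * dP B - dU B) + dV A * dP B := by
      rw [dU_append]; simp only [dP_cons, dU_cons]
    have hCq : dQ (A ++ 1 :: B) = dP A * (1 * dQ B - dV B) + dQ A * dQ B := by
      rw [dQ_append]; simp only [dQ_cons, dV_cons]
    have hCv : dV (A ++ 1 :: B) = dU A * (1 * dQ B - dV B) + dV A * dQ B := by
      rw [dV_append]; simp only [dQ_cons, dV_cons]
    have detA := dd4_det A
    have idP : dP B = dP A * dU (A ++ 1 :: B) - dU A * dP (A ++ 1 :: B) := by
      rw [hCp, hCu]; linear_combination (-(dP B)) * detA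
    have idS : dP B - dU B = dV A * dP (A ++ 1 :: B) - dQ A * dU (A ++ 1 :: B) := by
      rw [hCp, hCu]; linear_combination (-(dP B - dU B)) * detA
    -- main claim : dP C₀ = 1 and dU C₀ = 1
    have hpu : dP (A ++ 1 :: B) = 1 ∧ dU (A ++ 1 :: B) = 1 := by
      rcases le_or_gt m 0 with hm | hm
      · obtain ⟨g1, g2⟩ := contracts_nonpos hC m (A ++ 1 :: B) rfl hm
        simp only [dP_cons, dQ_cons, dU_cons, dV_cons, dP_nil, dQ_nil, dU_nil, dV_nil,
          mul_one, mul_zero, sub_zero] at g1 g2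
        constructor
        · linarith
        · nlinarith [g1, g2]
      · obtain ⟨k, l, hk, hl, E1, E2, E3, E4⟩ := contracts_dd4 hC
        simp only [dP_cons, dQ_cons, dU_cons, dV_cons, dP_nil, dQ_nil, dU_nil, dV_nil,
          mul_one, mul_zero, sub_zero] at E1 E2 E3 E4
        -- E1 : m*1-1 = m * dP C₀ - dU C₀ etc
        have hp_eq : dP (A ++ 1 :: B) = 1 + k * (m - 1) := by
          linear_combination (-1 : ℤ) * E2 - k * E1
        have hkz : k * (m - 1) = 0 := by
          rcases eq_or_lt_of_le (show (1:ℤ) ≤ m from hm) with hm1 | hm2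
          · rw [← hm1]; ring
          · -- 2 ≤ m : show k = 0
            have hm2' : 2 ≤ m := hm2
            have hu_eq : dU (A ++ 1 :: B) = 1 + k * m * (m - 1) := by
              linear_combination m * hp_eq + E1
            have hq_eq : dQ (A ++ 1 :: B) = -1 - l * dP (A ++ 1 :: B) - k * m := by
              linear_combination (-1 : ℤ) * E4 - k * E3
            have hv_eq : dV (A ++ 1 :: B) = m * dQ (A ++ 1 :: B) + m + l * (m - 1) := by
              linear_combination E3 - l * E1
            have idQ : dQ B = dP A * dV (A ++ 1 :: B) - dU A * dQ (A ++ 1 :: B) := by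
              rw [hCq, hCv]; linear_combination (-(dQ B)) * detA
            have hpB : dP B = (dP A - dU A) + k * (m - 1) * (m * dP A - dU A) := by
              rw [idP]; linear_combination dP A * hu_eq - dU A * hp_eq
            have hqB : -dQ B = l * dP B + k * m * (m * dP A - dU A) - dU A := by
              linear_combination (-1 : ℤ) * idQ - dP A * hv_eq + (dU A - dP A * m) * hq_eq
                + l * (dP A * m - dU A) * hp_eq - l * hpB
            -- bounds
            obtain ⟨hbA1, hbA2, hbA3⟩ := dd4_bounds A (Or.inr hA)
            have hbA4 : 1 ≤ dU A := by
              rcases hAc : A with _ | ⟨a, T⟩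
              · exact absurd hAc hAne
              · have hT : T = [] ∨ Admissible T := admissible_tail (hAc ▸ hA)
                have := (dd4_bounds T hT).1
                simpa using this
            obtain ⟨hbB1, hbB2, hbB3⟩ := dd4_bounds B hB
            obtain ⟨hbBq1, hbBq2⟩ := dd4_bounds_q B hB
            by_contra hkne
            have hk1 : 1 ≤ k := by
              rcases eq_or_lt_of_le hk with h' | h'
              · exact absurd (by rw [← h']; ring) hkne
              · omega
            have hS : dP A + 1 ≤ m * dP A - dU A := by
              have h0 : (0:ℤ) ≤ (m - 2) * dP A := mul_nonneg (by linarith) (by linarith)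
              linarith
            have hXeq : dP B - 1 + dQ B =
                dP A - 1 - l * dP B - k * (m * dP A - dU A) := by
              linear_combination hpB - hqB
            have hlpB : 0 ≤ l * dP B := mul_nonneg hl (by linarith)
            have hkS : m * dP A - dU A ≤ k * (m * dP A - dU A) := by
              have h0 : (0:ℤ) ≤ (k - 1) * (m * dP A - dU A) := mul_nonneg (by linarith) (by linarith)
              linarith
            linarith [hbBq2]
        constructor
        · rw [hp_eq, hkz]; ring
        · have hu_eq : dU (A ++ 1 :: B) = 1 + k * m * (m - 1) := by
            linear_combination m * hp_eq + E1
          rw [hu_eq]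
          have : k * m * (m - 1) = m * (k * (m - 1)) := by ring
          rw [this, hkz]; ring
    -- now conclude B = Astar.dropLast
    have hpB : dP B = dP A - dU A := by rw [idP, hpu.1, hpu.2]; ring
    have huB : dU B = dP A - dU A - dV A + dQ A := by
      have := idS
      rw [hpu.1, hpu.2, hpB] at this
      linarith
    have hpB' : dP (adjR A.reverse).dropLast = dP A - dU A := by
      rw [hdropAdj.1, s2]; ring
    have huB' : dU (adjR A.reverse).dropLast = dP A - dU A - dV A + dQ A := by
      rw [hdropAdj.2, s4]; ring
    have hBeq : B = (adjR A.reverse).dropLast := by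
      apply dd4_inj B (adjR A.reverse).dropLast hB (dropLast_admissible hadjAdm)
      · rw [hpB, hpB']
      · rw [huB, huB']
    rw [hBeq, hAstarEq]
  · -- easy direction
    intro hBeq
    have h := contracts_aux A.reverse hRne hR2 [m]
    rw [List.reverse_reverse] at h
    have hgoal : [m] ++ A ++ [1] ++ B = [m] ++ A ++ [1] ++ (adjR A.reverse).dropLast := by
      rw [hBeq, hAstarEq]
    rw [hgoal]
    have : ([m] : List ℤ) ++ [1] = [m, 1] := rfl
    rw [← this]
    simpa [List.append_assoc] using h

/-- let `A` be an admissible twig, `B` a twig that is either empty or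
admissible, `m` an integer, and let `Astar` be the adjoint of `A` (the unique admissible
twig with `d(Astar) = d(A)` and `d(Astar̄) = d(A) − d(A̲)`).  Then `[m] ++ A ++ [1] ++ B`
contracts to `[m, 1]` if and only if `B` equals `Astar` with its last entry removed. -/
theorem stmt5 (A B Astar : List ℤ) (hA : Admissible A)
    (hB : B = [] ∨ Admissible B) (m : ℤ)
    (hAstar : Admissible Astar) (hd : twigDet Astar = twigDet A)
    (hdbar : twigDet Astar.tail = twigDet A - twigDet A.dropLast) :
    Contracts ([m] ++ A ++ [1] ++ B) [m, 1] ↔ B = Astar.dropLast :=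
  stmt5_aux A B Astar hA hB m hAstar hd hdbar
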